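/- Let X be a finite metric space whose metric is a rescaled discrete metric d(x,y) = c·1_{x≠y} for some c > 0, with |X| = k. Then the blowup-polynomial satisfies p_X(n_1,…,n_k) = c^k ( ∏_{i=1}^k (n_i − 2) + Σ_{i=1}^k n_i ∏_{i'≠i} (n_{i'} − 2) ); in particular p_X is a symmetric polynomial in n_1,…,n_k. -/

import Mathlib

open Matrix MvPolynomial BigOperators

lemma aux_det_field {k : ℕ} {K : Type*} [Field K] (d u : Fin k → K) (hd : ∀ i, d i ≠ 0) :
    (Matrix.diagonal d + Matrix.replicateCol Unit u * Matrix.replicateRow Unit (1 : Fin k → K)).det =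
      (∏ i, d i) + ∑ i, u i * ∏ i' ∈ Finset.univ.erase i, d i' := by
  have hdet : IsUnit (Matrix.diagonal d).det := by
    rw [Matrix.det_diagonal]
    exact (Finset.prod_ne_zero_iff.2 fun i _ => hd i).isUnit
  rw [Matrix.det_add_replicateCol_mul_replicateRow hdet u 1, Matrix.det_diagonal]
  rw [Matrix.det_unique]
  have hinv : (Matrix.diagonal d)⁻¹ = Matrix.diagonal (fun i => (d i)⁻¹) := by
    refine Matrix.inv_eq_right_inv ?_
    rw [Matrix.diagonal_mul_diagonal]
    have h1 : (fun i => d i * (d i)⁻¹) = fun _ => (1 : K) :=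
      funext fun i => mul_inv_cancel₀ (hd i)
    rw [h1, Matrix.diagonal_one]
  rw [hinv, Matrix.add_apply, Matrix.one_apply_eq]
  have hentry : ((Matrix.replicateRow Unit (1 : Fin k → K) * Matrix.diagonal (fun i => (d i)⁻¹) *
      Matrix.replicateCol Unit u : Matrix Unit Unit K)) default default = ∑ j, (d j)⁻¹ * u j := by
    simp [Matrix.mul_apply, Matrix.diagonal_apply, Finset.mul_sum]
  rw [hentry, mul_add, mul_one, Finset.mul_sum]
  congr 1
  refine Finset.sum_congr rfl fun j _ => ?_
  rw [← Finset.mul_prod_erase Finset.univ d (Finset.mem_univ j)]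
  have h2 : (d j * ∏ x ∈ Finset.univ.erase j, d x) * ((d j)⁻¹ * u j) =
      (d j * (d j)⁻¹) * ((∏ x ∈ Finset.univ.erase j, d x) * u j) := by ring
  rw [h2, mul_inv_cancel₀ (hd j), one_mul, mul_comm]

lemma aux_X_sub_two_ne_zero {k : ℕ} (i : Fin k) :
    (MvPolynomial.X i - 2 : MvPolynomial (Fin k) ℝ) ≠ 0 := by
  intro h
  have := congrArg (MvPolynomial.eval (fun _ => (0 : ℝ))) h
  simp [map_ofNat] at this

lemma aux_det_poly {k : ℕ} :
    (Matrix.diagonal (fun i : Fin k => (MvPolynomial.X i - 2 : MvPolynomial (Fin k) ℝ)) +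
        Matrix.replicateCol Unit (fun i : Fin k => (MvPolynomial.X i : MvPolynomial (Fin k) ℝ)) *
          Matrix.replicateRow Unit (1 : Fin k → MvPolynomial (Fin k) ℝ)).det =
      (∏ i, (MvPolynomial.X i - 2 : MvPolynomial (Fin k) ℝ)) +
        ∑ i, MvPolynomial.X i * ∏ i' ∈ Finset.univ.erase i, (MvPolynomial.X i' - 2) := by
  set R := MvPolynomial (Fin k) ℝ
  set K := FractionRing R
  set φ : R →+* K := algebraMap R K with hφ
  have hinj : Function.Injective φ := IsFractionRing.injective R K
  apply hinj
  set d : Fin k → R := fun i => MvPolynomial.X i - 2 with hd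
  set u : Fin k → R := fun i => MvPolynomial.X i with hu
  have hmap : (Matrix.diagonal d + Matrix.replicateCol Unit u * Matrix.replicateRow Unit (1 : Fin k → R)).map φ =
      Matrix.diagonal (fun i => φ (d i)) + Matrix.replicateCol Unit (fun i => φ (u i)) *
        Matrix.replicateRow Unit (1 : Fin k → K) := by
    ext i j
    by_cases h : i = j <;>
      simp [Matrix.map_apply, Matrix.mul_apply, Matrix.diagonal_apply, h]
  rw [RingHom.map_det, RingHom.mapMatrix_apply, hmap,
    aux_det_field (fun i => φ (d i)) (fun i => φ (u i))
      (fun i => fun h0 => aux_X_sub_two_ne_zero i (hinj (by rw [map_zero]; exact h0)))]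
  rw [map_add, map_prod, map_sum]
  congr 1
  refine Finset.sum_congr rfl fun i _ => ?_
  rw [_root_.map_mul, map_prod]

/-- for the rescaled discrete metric `d(x,y) = c·1_{x≠y}` (`c > 0`)
on `k` points, the blowup-polynomial equals
`c^k (∏ᵢ (nᵢ - 2) + ∑ᵢ nᵢ ∏_{i'≠i} (n_{i'} - 2))`; in particular it is a symmetric
polynomial in `n_1, …, n_k`. -/
theorem blowup_poly_discrete_metric (k : ℕ) (hk : 2 ≤ k) (c : ℝ) (hc : 0 < c) :
    ∀ P : MvPolynomial (Fin k) ℝ,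
      P = (Matrix.diagonal (fun _ : Fin k => MvPolynomial.C (-2 * c)) +
            Matrix.diagonal (fun i => (MvPolynomial.X i : MvPolynomial (Fin k) ℝ)) *
              (Matrix.of fun i j : Fin k =>
                MvPolynomial.C (if i = j then 2 * c else c))).det →
      P = MvPolynomial.C (c ^ k) *
            ((∏ i, (MvPolynomial.X i - 2)) +
              ∑ i, MvPolynomial.X i * ∏ i' ∈ Finset.univ.erase i, (MvPolynomial.X i' - 2)) ∧
      P.IsSymmetric := by
  intro P hP
  set d : Fin k → MvPolynomial (Fin k) ℝ := fun i => MvPolynomial.X i - 2 with hd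
  set u : Fin k → MvPolynomial (Fin k) ℝ := fun i => MvPolynomial.X i with hu
  have hM : (Matrix.diagonal (fun _ : Fin k => MvPolynomial.C (-2 * c)) +
      Matrix.diagonal (fun i => (MvPolynomial.X i : MvPolynomial (Fin k) ℝ)) *
        (Matrix.of fun i j : Fin k => MvPolynomial.C (if i = j then 2 * c else c))) =
      (MvPolynomial.C c : MvPolynomial (Fin k) ℝ) • (Matrix.diagonal d + Matrix.replicateCol Unit u * Matrix.replicateRow Unit (1 : Fin k → MvPolynomial (Fin k) ℝ)) := by
    refine Matrix.ext fun i j => ?_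
    by_cases h : i = j <;>
      · simp only [Matrix.add_apply, Matrix.smul_apply, Matrix.mul_apply,
          Matrix.diagonal_apply, Matrix.of_apply, Matrix.replicateCol_apply, Matrix.replicateRow_apply,
          smul_eq_mul, hd, hu, h]
        simp [h, Finset.sum_ite_eq, MvPolynomial.C_mul, map_neg, map_ofNat]
        ring
  rw [hM, Matrix.det_smul, aux_det_poly, Fintype.card_fin, ← map_pow] at hP
  refine ⟨hP, ?_⟩
  intro e
  rw [hP, _root_.map_mul, rename_C, map_add]
  congr 1
  congr 1
  · rw [map_prod]
    simp only [map_sub, rename_X, map_ofNat]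
    exact Equiv.prod_comp e (fun j => MvPolynomial.X j - 2)
  · rw [map_sum]
    refine Fintype.sum_equiv e _ _ fun i => ?_
    simp only [_root_.map_mul, rename_X, map_prod, map_sub, map_ofNat]
    congr 1
    have himg : (Finset.univ.erase i).image e = Finset.univ.erase (e i) := by
      rw [Finset.image_erase e.injective, Finset.image_univ_equiv]
    rw [← himg, Finset.prod_image (fun x _ y _ h => e.injective h)]
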